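/- arXiv:2304.09495 — 6 statements merged into one kernel-verified Lean document; each statement's English description precedes it below -/
import Mathlib

section
/- Every m×n integer matrix M can be transformed, using only negations of rows and negations of columns (i.e., there exist diagonal ±1 matrices D₁ of size m×m and D₂ of size n×n), into a matrix N = D₁·M·D₂ in which every nonzero row and every nonzero column begins with a negative entry. -/
open Matrix

/-- A vector begins with a negative entry: its first nonzero coordinate is negative. -/
def BeginsNeg {k : ℕ} (v : Fin k → ℤ) : Prop :=
  ∃ j : Fin k, v j < 0 ∧ ∀ i : Fin k, i < j → v i = 0

def esgn (b : Bool) : ℤ := if b then 1 else -1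

lemma esgn_pm (b : Bool) : esgn b = 1 ∨ esgn b = -1 := by cases b <;> simp [esgn]

lemma esgn_not (b : Bool) : esgn (!b) = -esgn b := by cases b <;> simp [esgn]

lemma geomZ (k : ℕ) : ∑ j : Fin k, (2:ℤ)^(k-1-j.val) = 2^k - 1 := by
  induction k with
  | zero => simp
  | succ k ih =>
    rw [Fin.sum_univ_succ]
    have h1 : ∀ j : Fin k, (k+1) - 1 - (j.succ).val = k - 1 - j.val := by
      intro j; simp only [Fin.val_succ]; omega
    simp only [h1, ih, Fin.val_zero, Nat.sub_zero]
    show (2:ℤ)^k + (2^k-1) = 2^(k+1) - 1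
    ring

lemma domZ (k : ℕ) (v : Fin k → ℤ) (hv : ∀ j, v j = 1 ∨ v j = 0 ∨ v j = -1)
    (j₀ : Fin k) (h₀ : v j₀ = 1) (hz : ∀ i, i < j₀ → v i = 0) :
    0 < ∑ j, v j * 2^(k-1-j.val) := by
  induction k with
  | zero => exact j₀.elim0
  | succ k ih =>
    rw [Fin.sum_univ_succ]
    have h1 : ∀ j : Fin k, (k+1) - 1 - (j.succ).val = k - 1 - j.val := by
      intro j; simp only [Fin.val_succ]; omega
    rcases Fin.eq_zero_or_eq_succ j₀ with rfl | ⟨j', rfl⟩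
    · have hb : |∑ j : Fin k, v j.succ * 2^((k+1)-1-(j.succ).val)| ≤ 2^k - 1 := by
        calc |∑ j : Fin k, v j.succ * 2^((k+1)-1-(j.succ).val)|
            ≤ ∑ j : Fin k, |v j.succ * 2^((k+1)-1-(j.succ).val)| :=
              Finset.abs_sum_le_sum_abs _ _
          _ ≤ ∑ j : Fin k, (2:ℤ)^(k-1-j.val) := by
              apply Finset.sum_le_sum
              intro j _
              rw [h1 j, abs_mul]
              have : |v j.succ| ≤ 1 := by rcases hv j.succ with h|h|h <;> simp [h]
              have hp : |(2:ℤ)^(k-1-j.val)| = 2^(k-1-j.val) := abs_of_nonneg (by positivity)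
              rw [hp]
              nlinarith [pow_pos (by norm_num : (0:ℤ) < 2) (k-1-j.val)]
          _ = 2^k - 1 := geomZ k
      have h00 : v 0 = 1 := h₀
      rw [h00]
      simp only [Fin.val_zero, Nat.sub_zero]
      have h2 := (abs_le.mp hb).1
      rw [one_mul]
      have hk2 : (2:ℤ)^(k+1-1) = 2^k := by norm_num
      rw [hk2]
      linarith
    · have h0 : v 0 = 0 := hz 0 (Fin.succ_pos j')
      rw [h0, zero_mul, zero_add]
      have := ih (fun j => v j.succ) (fun j => hv _) j' h₀
        (fun i hi => hz i.succ (by simpa using hi))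
      calc (0:ℤ) < ∑ j : Fin k, v j.succ * 2^(k-1-j.val) := this
        _ = ∑ j : Fin k, v j.succ * 2^((k+1)-1-(j.succ).val) := by
            apply Finset.sum_congr rfl; intro j _; rw [h1 j]

section Main
variable {m n : ℕ}

def NpM (M : Matrix (Fin m) (Fin n) ℤ) (p : (Fin m → Bool) × (Fin n → Bool)) :
    Fin m → Fin n → ℤ := fun i j => esgn (p.1 i) * M i j * esgn (p.2 j)

def RpM (M : Matrix (Fin m) (Fin n) ℤ) (p : (Fin m → Bool) × (Fin n → Bool)) (i : Fin m) : ℤ :=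
  ∑ j, (NpM M p i j).sign * 2^(n-1-j.val)

def CpM (M : Matrix (Fin m) (Fin n) ℤ) (p : (Fin m → Bool) × (Fin n → Bool)) (j : Fin n) : ℤ :=
  ∑ i, (NpM M p i j).sign * 2^(m-1-i.val)

def fpM (M : Matrix (Fin m) (Fin n) ℤ) (p : (Fin m → Bool) × (Fin n → Bool)) : ℤ :=
  ∑ i, 2^(m-1-i.val) * RpM M p i

lemma fp_col (M : Matrix (Fin m) (Fin n) ℤ) (p : (Fin m → Bool) × (Fin n → Bool)) :
    fpM M p = ∑ j, 2^(n-1-j.val) * CpM M p j := by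
  unfold fpM RpM CpM
  simp only [Finset.mul_sum]
  rw [Finset.sum_comm]
  apply Finset.sum_congr rfl; intro j _
  apply Finset.sum_congr rfl; intro i _
  ring

lemma flip_row (M : Matrix (Fin m) (Fin n) ℤ) (p : (Fin m → Bool) × (Fin n → Bool)) (i : Fin m) :
    fpM M (Function.update p.1 i (!p.1 i), p.2)
      = fpM M p - 2 * (2^(m-1-i.val) * RpM M p i) := by
  set q : (Fin m → Bool) × (Fin n → Bool) := (Function.update p.1 i (!p.1 i), p.2) with hq
  have hN : ∀ i' j, NpM M q i' j = if i' = i then -NpM M p i' j else NpM M p i' j := by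
    intro i' j
    unfold NpM
    by_cases h : i' = i
    · subst h
      simp only [hq, Function.update_self, esgn_not, if_pos rfl, eq_self_iff_true, if_true]
      ring
    · simp [hq, Function.update_of_ne h, h]
  have hR : ∀ i', RpM M q i' = if i' = i then -RpM M p i' else RpM M p i' := by
    intro i'
    unfold RpM
    by_cases h : i' = i
    · rw [if_pos h]
      simp only [hN, if_pos h, Int.sign_neg, neg_mul]
      exact Finset.sum_neg_distrib _
    · rw [if_neg h]
      simp only [hN, if_neg h]
  have key : ∀ i', 2^(m-1-i'.val) * RpM M p i' - 2^(m-1-i'.val) * RpM M q i'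
      = if i' = i then 2 * (2^(m-1-i.val) * RpM M p i) else 0 := by
    intro i'
    rw [hR i']
    by_cases h : i' = i
    · subst h; rw [if_pos rfl, if_pos rfl]; ring
    · rw [if_neg h, if_neg h]; ring
  have h2 : fpM M p - fpM M q = 2 * (2^(m-1-i.val) * RpM M p i) := by
    unfold fpM
    rw [← Finset.sum_sub_distrib]
    simp only [key]
    rw [Finset.sum_ite_eq' Finset.univ i]
    simp
  linarith

lemma flip_col (M : Matrix (Fin m) (Fin n) ℤ) (p : (Fin m → Bool) × (Fin n → Bool)) (j : Fin n) :
    fpM M (p.1, Function.update p.2 j (!p.2 j))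
      = fpM M p - 2 * (2^(n-1-j.val) * CpM M p j) := by
  set q : (Fin m → Bool) × (Fin n → Bool) := (p.1, Function.update p.2 j (!p.2 j)) with hq
  have hN : ∀ i j', NpM M q i j' = if j' = j then -NpM M p i j' else NpM M p i j' := by
    intro i j'
    unfold NpM
    by_cases h : j' = j
    · subst h
      simp only [hq, Function.update_self, esgn_not, if_pos rfl, eq_self_iff_true, if_true]
      ring
    · simp [hq, Function.update_of_ne h, h]
  have hC : ∀ j', CpM M q j' = if j' = j then -CpM M p j' else CpM M p j' := by
    intro j'
    unfold CpM
    by_cases h : j' = j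
    · rw [if_pos h]
      simp only [hN, if_pos h, Int.sign_neg, neg_mul]
      exact Finset.sum_neg_distrib _
    · rw [if_neg h]
      simp only [hN, if_neg h]
  have key : ∀ j', 2^(n-1-j'.val) * CpM M p j' - 2^(n-1-j'.val) * CpM M q j'
      = if j' = j then 2 * (2^(n-1-j.val) * CpM M p j) else 0 := by
    intro j'
    rw [hC j']
    by_cases h : j' = j
    · subst h; rw [if_pos rfl, if_pos rfl]; ring
    · rw [if_neg h, if_neg h]; ring
  have h2 : fpM M p - fpM M q = 2 * (2^(n-1-j.val) * CpM M p j) := by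
    rw [fp_col M p, fp_col M q, ← Finset.sum_sub_distrib]
    simp only [key]
    rw [Finset.sum_ite_eq' Finset.univ j]
    simp
  linarith

lemma sign_tri (a : ℤ) : a.sign = 1 ∨ a.sign = 0 ∨ a.sign = -1 := by
  rcases lt_trichotomy a 0 with h|h|h
  · right; right; rwa [Int.sign_eq_neg_one_iff_neg]
  · right; left; simp [h]
  · left; rwa [Int.sign_eq_one_iff_pos]


/-- Every integer matrix can be transformed, using only row negations and
column negations (i.e. multiplication by diagonal ±1 matrices on the left and right),
into a matrix in which every nonzero row and every nonzero column begins with a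
negative entry. -/
theorem exists_row_col_negations_all_begin_negative {m n : ℕ}
    (M : Matrix (Fin m) (Fin n) ℤ) :
    ∃ (d₁ : Fin m → ℤ) (d₂ : Fin n → ℤ),
      (∀ i, d₁ i = 1 ∨ d₁ i = -1) ∧ (∀ j, d₂ j = 1 ∨ d₂ j = -1) ∧
      (∀ i : Fin m,
        ((Matrix.diagonal d₁ * M * Matrix.diagonal d₂) i ≠ 0 →
          BeginsNeg ((Matrix.diagonal d₁ * M * Matrix.diagonal d₂) i))) ∧
      (∀ j : Fin n,
        ((fun i => (Matrix.diagonal d₁ * M * Matrix.diagonal d₂) i j) ≠ 0 →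
          BeginsNeg (fun i => (Matrix.diagonal d₁ * M * Matrix.diagonal d₂) i j))) := by
  obtain ⟨p, hmin⟩ := Finite.exists_min (fpM M)
  refine ⟨fun i => esgn (p.1 i), fun j => esgn (p.2 j),
    fun i => esgn_pm _, fun j => esgn_pm _, ?_, ?_⟩
  · -- rows
    intro i hi
    have hent : (Matrix.diagonal (fun i => esgn (p.1 i)) * M *
        Matrix.diagonal (fun j => esgn (p.2 j))) i = fun j => NpM M p i j := by
      funext j
      simp [Matrix.mul_diagonal, Matrix.diagonal_mul, NpM]
    rw [hent] at hi ⊢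
    obtain ⟨j1, hj1⟩ := Function.ne_iff.mp hi
    classical
    have hj1' : NpM M p i j1 ≠ 0 := by simpa using hj1
    obtain ⟨j₀, hj₀, hj₀min⟩ : ∃ j₀, NpM M p i j₀ ≠ 0 ∧
        ∀ j', NpM M p i j' ≠ 0 → j₀ ≤ j' := by
      have hSne : (Finset.univ.filter (fun j => NpM M p i j ≠ 0)).Nonempty :=
        ⟨j1, by simp [hj1']⟩
      exact ⟨Finset.min' _ hSne, (Finset.mem_filter.mp (Finset.min'_mem _ hSne)).2,
        fun j' h => Finset.min'_le _ _ (by simp [h])⟩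
    have hzero : ∀ j', j' < j₀ → NpM M p i j' = 0 := by
      intro j' hj'
      by_contra hc
      exact absurd (hj₀min j' hc) (not_le.mpr hj')
    rcases hj₀.lt_or_gt with hneg | hpos
    · exact ⟨j₀, hneg, hzero⟩
    · exfalso
      have hRpos : 0 < RpM M p i := by
        apply domZ n (fun j => (NpM M p i j).sign)
        · intro j; exact sign_tri _
        · exact Int.sign_eq_one_iff_pos.mpr hpos
        · intro j' h; simp [hzero j' h]
      have hflip := flip_row M p i
      have hle := hmin (Function.update p.1 i (!p.1 i), p.2)
      have hpw : (0:ℤ) < 2^(m-1-i.val) := by positivity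
      nlinarith
  · -- columns
    intro j hj
    have hent : (fun i => (Matrix.diagonal (fun i => esgn (p.1 i)) * M *
        Matrix.diagonal (fun j => esgn (p.2 j))) i j) = fun i => NpM M p i j := by
      funext i
      simp [Matrix.mul_diagonal, Matrix.diagonal_mul, NpM]
    rw [hent] at hj ⊢
    obtain ⟨i1, hi1⟩ := Function.ne_iff.mp hj
    classical
    have hi1' : NpM M p i1 j ≠ 0 := by simpa using hi1
    obtain ⟨i₀, hi₀, hi₀min⟩ : ∃ i₀, NpM M p i₀ j ≠ 0 ∧
        ∀ i', NpM M p i' j ≠ 0 → i₀ ≤ i' := by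
      have hSne : (Finset.univ.filter (fun i => NpM M p i j ≠ 0)).Nonempty :=
        ⟨i1, by simp [hi1']⟩
      exact ⟨Finset.min' _ hSne, (Finset.mem_filter.mp (Finset.min'_mem _ hSne)).2,
        fun i' h => Finset.min'_le _ _ (by simp [h])⟩
    have hzero : ∀ i', i' < i₀ → NpM M p i' j = 0 := by
      intro i' hi'
      by_contra hc
      exact absurd (hi₀min i' hc) (not_le.mpr hi')
    rcases hi₀.lt_or_gt with hneg | hpos
    · exact ⟨i₀, hneg, hzero⟩
    · exfalso
      have hCpos : 0 < CpM M p j := by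
        apply domZ m (fun i => (NpM M p i j).sign)
        · intro i; exact sign_tri _
        · exact Int.sign_eq_one_iff_pos.mpr hpos
        · intro i' h; simp [hzero i' h]
      have hflip := flip_col M p j
      have hle := hmin (p.1, Function.update p.2 j (!p.2 j))
      have hpw : (0:ℤ) < 2^(n-1-j.val) := by positivity
      nlinarith

end Main
end

section
/- Let M be an m×n integer matrix that is minimal in its Hadamard equivalence class with respect to the row-lex ordering. Then the columns of M are in weakly increasing order with respect to the lexicographic order on integer m-vectors: M^1 ≤ M^2 ≤ ⋯ ≤ M^n, where M^j denotes the j-th column of M. -/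
open Matrix

/-- A signed permutation (monomial) matrix: a square integer matrix with entries in
`{-1, 0, 1}` having exactly one nonzero entry in each row and each column. -/
def IsSignedPerm {m : ℕ} (P : Matrix (Fin m) (Fin m) ℤ) : Prop :=
  (∀ i j, P i j = -1 ∨ P i j = 0 ∨ P i j = 1) ∧
  (∀ i, ∃! j, P i j ≠ 0) ∧
  (∀ j, ∃! i, P i j ≠ 0)

/-- Hadamard equivalence: `N = P * M * Q` for signed permutation matrices `P`, `Q`. -/
def HadamardEquiv {m n : ℕ} (M N : Matrix (Fin m) (Fin n) ℤ) : Prop :=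
  ∃ P : Matrix (Fin m) (Fin m) ℤ, ∃ Q : Matrix (Fin n) (Fin n) ℤ,
    IsSignedPerm P ∧ IsSignedPerm Q ∧ N = P * M * Q

/-- The row-lex ordering: compare matrices lexicographically row by row, rows being
compared lexicographically entry by entry. -/
def rowLexLe {m n : ℕ} (M N : Matrix (Fin m) (Fin n) ℤ) : Prop :=
  toLex (fun i => toLex (M i)) ≤ toLex (fun i => toLex (N i))

/-- `M` is minimal in its Hadamard equivalence class with respect to row-lex order. -/
def IsRowLexMinimal {m n : ℕ} (M : Matrix (Fin m) (Fin n) ℤ) : Prop :=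
  ∀ N, HadamardEquiv M N → rowLexLe M N

lemma isSignedPerm_permMatrix {k : ℕ} (σ : Equiv.Perm (Fin k)) :
    IsSignedPerm (σ.toPEquiv.toMatrix : Matrix (Fin k) (Fin k) ℤ) := by
  have hval : ∀ i j, (σ.toPEquiv.toMatrix : Matrix (Fin k) (Fin k) ℤ) i j
      = if j = σ i then 1 else 0 := by
    intro i j
    simp [PEquiv.toMatrix_apply, Equiv.toPEquiv_apply, Option.mem_def, eq_comm]
  refine ⟨fun i j => ?_, fun i => ?_, fun j => ?_⟩
  · rw [hval]; split <;> simp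
  · refine ⟨σ i, ?_, fun j hj => ?_⟩
    · simp only [hval]; simp
    · simp only [hval] at hj
      by_contra h
      exact hj (by simp [h])
  · refine ⟨σ.symm j, ?_, fun i hi => ?_⟩
    · simp only [hval]; simp
    · simp only [hval] at hi
      by_contra h
      have : j ≠ σ i := fun hc => h (by rw [hc]; simp)
      exact hi (by simp [this])

lemma isSignedPerm_one {k : ℕ} : IsSignedPerm (1 : Matrix (Fin k) (Fin k) ℤ) := by
  have := isSignedPerm_permMatrix (k := k) (Equiv.refl _)
  rwa [Equiv.toPEquiv_refl, PEquiv.toMatrix_refl] at this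

lemma lex_asymm {k : ℕ} {α : Type*} [PartialOrder α] {x y : Fin k → α}
    (h1 : ∃ i, (∀ j, j < i → x j = y j) ∧ x i < y i)
    (h2 : ∃ i, (∀ j, j < i → y j = x j) ∧ y i < x i) : False := by
  obtain ⟨a, ea, la⟩ := h1
  obtain ⟨b, eb, lb⟩ := h2
  rcases lt_trichotomy a b with h | rfl | h
  · rw [eb a h] at la; exact lt_irrefl _ la
  · exact lt_asymm la lb
  · rw [ea b h] at lb; exact lt_irrefl _ lb

/-- In a matrix minimal in its Hadamard equivalence class with respect to the
row-lex ordering, the columns are in weakly increasing lexicographic order. -/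
theorem cols_of_minimal_monotone {m n : ℕ} (M : Matrix (Fin m) (Fin n) ℤ)
    (hM : IsRowLexMinimal M) :
    ∀ j₁ j₂ : Fin n, j₁ ≤ j₂ →
      toLex (fun i => M i j₁) ≤ toLex (fun i => M i j₂) := by
  intro j₁ j₂ hle
  by_contra hcon
  have hne : j₁ ≠ j₂ := by
    rintro rfl
    exact hcon le_rfl
  have hjlt : j₁ < j₂ := lt_of_le_of_ne hle hne
  -- extract the first differing row, using trichotomy of the lex order
  have htri := (Pi.isTrichotomous_lex (β := fun _ : Fin m => ℤ) (· < ·)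
    (@fun _ a b => a < b) (IsWellFounded.wf)).trichotomous
    (fun i => M i j₁) (fun i => M i j₂)
  have hcon' : ∃ i, (∀ j, j < i → M j j₂ = M j j₁) ∧ M i j₂ < M i j₁ := by
    rcases (or_iff_not_imp_left.2 fun h1 => or_iff_not_imp_right.2 fun h3 => htri h1 h3) with h | h | h
    · exact absurd (Or.inr h) hcon
    · exact absurd (Or.inl (congrArg toLex h)) hcon
    · exact h
  obtain ⟨i₀, hfst, hi₀⟩ := hcon'
  -- the column-swapped matrix
  set σ : Equiv.Perm (Fin n) := Equiv.swap j₁ j₂ with hσ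
  set N : Matrix (Fin m) (Fin n) ℤ := M.submatrix id σ.symm with hN
  have hequiv : HadamardEquiv M N := by
    refine ⟨1, σ.toPEquiv.toMatrix, isSignedPerm_one, isSignedPerm_permMatrix σ, ?_⟩
    rw [Matrix.one_mul, PEquiv.mul_toMatrix_toPEquiv]
  have hle2 := hM N hequiv
  -- N entries
  have hNval : ∀ i l, N i l = M i (σ l) := by
    intro i l
    simp [hN, Matrix.submatrix_apply, Equiv.symm_swap, hσ]
  -- rows below i₀ agree
  have hrows : ∀ i, i < i₀ → N i = M i := by
    intro i hi
    funext l
    rw [hNval]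
    rcases eq_or_ne l j₁ with rfl | h1
    · rw [hσ, Equiv.swap_apply_left]
      exact (hfst i hi).symm ▸ (hfst i hi)
    rcases eq_or_ne l j₂ with rfl | h2
    · rw [hσ, Equiv.swap_apply_right]
      exact (hfst i hi).symm
    · rw [hσ, Equiv.swap_apply_of_ne_of_ne h1 h2]
  -- N is strictly smaller row-lex
  have hlt : ∃ i, (∀ j, j < i → toLex (N j) = toLex (M j)) ∧
      toLex (N i) < toLex (M i) := by
    refine ⟨i₀, fun i hi => congrArg toLex (hrows i hi), ?_⟩
    -- row i₀ : N i₀ <ₗ M i₀, first difference at column j₁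
    refine ⟨j₁, fun l hl => ?_, ?_⟩
    · show N i₀ l = M i₀ l
      rw [hNval, hσ,
        Equiv.swap_apply_of_ne_of_ne (ne_of_lt hl) (ne_of_lt (hl.trans hjlt))]
    · show N i₀ j₁ < M i₀ j₁
      rw [hNval, hσ, Equiv.swap_apply_left]
      exact hi₀
  -- contradiction with minimality
  have hle2' : ((fun i => toLex (M i)) = fun i => toLex (N i)) ∨
      (∃ i, (∀ j, j < i → toLex (M j) = toLex (N j)) ∧
        toLex (M i) < toLex (N i)) := hle2
  rcases hle2' with h | h
  · have h1 : M i₀ j₁ = N i₀ j₁ := congrFun (congrArg ofLex (congrFun h i₀)) j₁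
    rw [hNval, hσ, Equiv.swap_apply_left] at h1
    rw [h1] at hi₀
    exact lt_irrefl _ hi₀
  · exact lex_asymm h hlt
end

section
/- An m×n integer matrix M is minimal in its Hadamard equivalence class with respect to the row-lex ordering if and only if for every i with 1 ≤ i ≤ m, the i×n submatrix M_{1:i} consisting of the first i rows of M is minimal in its own Hadamard equivalence class (among i×n integer matrices). -/
open Matrix

section Aux

variable {i m n : ℕ}

/-- Extend an `i×i` matrix to an `m×m` matrix as a block diagonal with the identity. -/
def extendP (h : i ≤ m) (P : Matrix (Fin i) (Fin i) ℤ) : Matrix (Fin m) (Fin m) ℤ :=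
  fun a b =>
    if ha : (a : ℕ) < i then
      if hb : (b : ℕ) < i then P ⟨a, ha⟩ ⟨b, hb⟩ else 0
    else if a = b then 1 else 0

lemma extendP_apply_lt (h : i ≤ m) (P : Matrix (Fin i) (Fin i) ℤ) {a b : Fin m}
    (ha : (a : ℕ) < i) (hb : (b : ℕ) < i) : extendP h P a b = P ⟨a, ha⟩ ⟨b, hb⟩ := by
  simp [extendP, ha, hb]

lemma extendP_apply_right_ge (h : i ≤ m) (P : Matrix (Fin i) (Fin i) ℤ) {a b : Fin m}
    (ha : (a : ℕ) < i) (hb : ¬ (b : ℕ) < i) : extendP h P a b = 0 := by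
  simp [extendP, ha, hb]

lemma extendP_apply_left_ge (h : i ≤ m) (P : Matrix (Fin i) (Fin i) ℤ) {a : Fin m} (b : Fin m)
    (ha : ¬ (a : ℕ) < i) : extendP h P a b = if a = b then 1 else 0 := by
  simp [extendP, ha]

lemma extendP_isSignedPerm (h : i ≤ m) {P : Matrix (Fin i) (Fin i) ℤ}
    (hP : IsSignedPerm P) : IsSignedPerm (extendP h P) := by
  obtain ⟨hent, hrow, hcol⟩ := hP
  refine ⟨?_, ?_, ?_⟩
  · intro a b
    by_cases ha : (a : ℕ) < i
    · by_cases hb : (b : ℕ) < i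
      · rw [extendP_apply_lt h P ha hb]; exact hent _ _
      · rw [extendP_apply_right_ge h P ha hb]; exact Or.inr (Or.inl rfl)
    · rw [extendP_apply_left_ge h P b ha]
      split_ifs
      · exact Or.inr (Or.inr rfl)
      · exact Or.inr (Or.inl rfl)
  · intro a
    by_cases ha : (a : ℕ) < i
    · obtain ⟨j, hj, huniq⟩ := hrow ⟨a, ha⟩
      refine ⟨Fin.castLE h j, ?_, ?_⟩
      · show extendP h P a (Fin.castLE h j) ≠ 0
        rw [extendP_apply_lt h P ha j.isLt]
        convert hj using 2
        rfl
      · intro b hb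
        by_cases hbi : (b : ℕ) < i
        · rw [extendP_apply_lt h P ha hbi] at hb
          have hv : (b : ℕ) = (j : ℕ) := congrArg Fin.val (huniq ⟨b, hbi⟩ hb)
          exact Fin.ext hv
        · rw [extendP_apply_right_ge h P ha hbi] at hb
          exact absurd rfl hb
    · refine ⟨a, ?_, ?_⟩
      · show extendP h P a a ≠ 0
        rw [extendP_apply_left_ge h P a ha, if_pos rfl]
        exact one_ne_zero
      · intro b hb
        rw [extendP_apply_left_ge h P b ha] at hb
        by_contra hne
        rw [if_neg (fun hab => hne hab.symm)] at hb
        exact hb rfl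
  · intro b
    by_cases hb : (b : ℕ) < i
    · obtain ⟨a, hja, huniq⟩ := hcol ⟨b, hb⟩
      refine ⟨Fin.castLE h a, ?_, ?_⟩
      · show extendP h P (Fin.castLE h a) b ≠ 0
        rw [extendP_apply_lt h P a.isLt hb]
        convert hja using 2
        rfl
      · intro c hc
        by_cases hci : (c : ℕ) < i
        · rw [extendP_apply_lt h P hci hb] at hc
          have hv : (c : ℕ) = (a : ℕ) := congrArg Fin.val (huniq ⟨c, hci⟩ hc)
          exact Fin.ext hv
        · rw [extendP_apply_left_ge h P b hci] at hc
          by_contra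
          have : c = b := by
            by_contra hne
            rw [if_neg hne] at hc; exact hc rfl
          exact hci (this ▸ hb)
    · refine ⟨b, ?_, ?_⟩
      · show extendP h P b b ≠ 0
        rw [extendP_apply_left_ge h P b hb, if_pos rfl]
        exact one_ne_zero
      · intro c hc
        by_cases hci : (c : ℕ) < i
        · rw [extendP_apply_right_ge h P hci hb] at hc
          exact absurd rfl hc
        · rw [extendP_apply_left_ge h P b hci] at hc
          by_contra hne
          rw [if_neg (fun hcb => hne hcb)] at hc
          exact hc rfl

lemma sum_castLE (h : i ≤ m) (g : Fin m → ℤ) (hg : ∀ k : Fin m, ¬ (k : ℕ) < i → g k = 0) :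
    ∑ k : Fin m, g k = ∑ k : Fin i, g (Fin.castLE h k) := by
  classical
  have hmap := Finset.sum_map (Finset.univ : Finset (Fin i))
    ⟨Fin.castLE h, Fin.castLE_injective h⟩ g
  simp only [Function.Embedding.coeFn_mk] at hmap
  rw [← hmap]
  refine (Finset.sum_subset (Finset.subset_univ _) ?_).symm
  intro x _ hx
  refine hg x (fun hxi => hx ?_)
  exact Finset.mem_map.2 ⟨⟨(x : ℕ), hxi⟩, Finset.mem_univ _, Fin.ext rfl⟩

lemma extendP_mul_apply (h : i ≤ m) (P : Matrix (Fin i) (Fin i) ℤ)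
    (M : Matrix (Fin m) (Fin n) ℤ) (Q : Matrix (Fin n) (Fin n) ℤ) (r : Fin i) (c : Fin n) :
    (extendP h P * M * Q) (Fin.castLE h r) c
      = (P * Matrix.of (fun (a : Fin i) b => M (Fin.castLE h a) b) * Q) r c := by
  rw [Matrix.mul_apply, Matrix.mul_apply]
  refine Finset.sum_congr rfl (fun j _ => ?_)
  congr 1
  rw [Matrix.mul_apply, Matrix.mul_apply]
  rw [sum_castLE h _ (fun k hk => ?_)]
  · refine Finset.sum_congr rfl (fun k _ => ?_)
    rw [extendP_apply_lt h P (by simpa using r.isLt) (by simpa using k.isLt)]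
    simp
  · rw [extendP_apply_right_ge h P (by simpa using r.isLt) hk, zero_mul]

end Aux

/-- A matrix is minimal in its Hadamard class with respect to the row-lex
ordering iff for every `i` with `1 ≤ i ≤ m`, the submatrix consisting of its first `i`
rows is minimal in its own Hadamard class. -/
theorem isMinimal_iff_initial_rows_isMinimal {m n : ℕ} (M : Matrix (Fin m) (Fin n) ℤ) :
    IsRowLexMinimal M ↔
      ∀ (i : ℕ), 1 ≤ i → ∀ (h : i ≤ m),
        IsRowLexMinimal (Matrix.of fun (r : Fin i) (c : Fin n) => M (Fin.castLE h r) c) := by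
  constructor
  · intro hmin i _ h N hNe
    obtain ⟨P, Q, hP, hQ, hN⟩ := hNe
    set Mi : Matrix (Fin i) (Fin n) ℤ :=
      Matrix.of fun (r : Fin i) (c : Fin n) => M (Fin.castLE h r) c with hMi
    haveI itri : IsTrichotomous (Lex (Fin n → ℤ)) (· < ·) :=
      ⟨fun a b =>
        (@Pi.isTrichotomous_lex (Fin n) (fun _ => ℤ) (· < ·) (fun {_} => (· < ·))
          (fun _ => inferInstance) IsWellFounded.wf).trichotomous (ofLex a) (ofLex b)⟩
    have htri := (@Pi.isTrichotomous_lex (Fin i) (fun _ => Lex (Fin n → ℤ))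
        (· < ·) (fun {_} => (· < ·)) (fun _ => itri)
        (IsWellFounded.wf)).trichotomous
        (fun r => toLex (Mi r)) (fun r => toLex (N r))
    rcases (or_iff_not_imp_left.2 fun h1 => or_iff_not_imp_right.2 fun h2 => htri h1 h2 : _ ∨ _ ∨ _) with hlt0 | heq | hgt
    · exact le_of_lt hlt0
    · exact le_of_eq (congrArg toLex heq)
    exfalso
    obtain ⟨r0, hpre, hr0⟩ := hgt
    set N' : Matrix (Fin m) (Fin n) ℤ := extendP h P * M * Q with hN'
    have hequiv : HadamardEquiv M N' :=
      ⟨extendP h P, Q, extendP_isSignedPerm h hP, hQ, rfl⟩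
    have hrowsN' : ∀ r : Fin i, N' (Fin.castLE h r) = N r := by
      intro r
      funext c
      rw [hN', extendP_mul_apply h P M Q r c, hN]
    have hlt' : @Pi.Lex (Fin m) (fun _ => Lex (Fin n → ℤ)) (· < ·) (fun {_} => (· < ·))
        (fun r => toLex (N' r)) (fun r => toLex (M r)) := by
      refine ⟨Fin.castLE h r0, ?_, ?_⟩
      · intro j hj
        have hji : (j : ℕ) < i :=
          lt_trans (show (j : ℕ) < (r0 : ℕ) from hj) r0.isLt
        have h2 : N ⟨(j : ℕ), hji⟩ = Mi ⟨(j : ℕ), hji⟩ :=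
          toLex_inj.mp (hpre ⟨(j : ℕ), hji⟩ hj)
        show toLex (N' j) = toLex (M j)
        have hjj : j = Fin.castLE h (⟨(j : ℕ), hji⟩ : Fin i) := Fin.ext rfl
        rw [hjj, hrowsN' ⟨(j : ℕ), hji⟩, h2]
        rfl
      · show toLex (N' (Fin.castLE h r0)) < toLex (M (Fin.castLE h r0))
        rw [hrowsN' r0]
        exact hr0
    exact absurd (lt_of_le_of_lt (hmin N' hequiv) hlt') (lt_irrefl _)
  · intro hall N hNe
    rcases Nat.eq_zero_or_pos m with hm | hm
    · subst hm
      exact le_of_eq (congrArg toLex (funext fun r => r.elim0))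
    · have hmin := hall m hm le_rfl
      have hM : (Matrix.of fun (r : Fin m) (c : Fin n) => M (Fin.castLE le_rfl r) c) = M := rfl
      rw [hM] at hmin
      exact hmin N hNe
end

section
/- For every m×n integer matrix M, the minimal element Min(M) of the Hadamard equivalence class of M with respect to the row-lex ordering equals the minimum, over all m×m signed permutation matrices P, of Ord(Neg(P·M)). -/
open Matrix

/-- A vector begins with a positive entry: its first nonzero coordinate is positive. -/
def BeginsPos {k : ℕ} (v : Fin k → ℤ) : Prop :=
  ∃ j : Fin k, 0 < v j ∧ ∀ i : Fin k, i < j → v i = 0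

/-- `NegCols M` is obtained from `M` by negating every column whose first nonzero
entry is positive. -/
noncomputable def NegCols {m n : ℕ} (M : Matrix (Fin m) (Fin n) ℤ) :
    Matrix (Fin m) (Fin n) ℤ :=
  haveI := Classical.propDecidable
  Matrix.of fun i j => if BeginsPos (fun r => M r j) then -M i j else M i j

/-- `OrdCols M` is obtained from `M` by permuting its columns so that they appear from
left to right in weakly increasing lexicographic order. -/
noncomputable def OrdCols {m n : ℕ} (M : Matrix (Fin m) (Fin n) ℤ) :
    Matrix (Fin m) (Fin n) ℤ :=
  letI : LinearOrder (Lex (Fin m → ℤ)) :=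
    @Pi.Lex.linearOrder (Fin m) (fun _ => ℤ)
      inferInstance (inferInstance : WellFoundedLT (Fin m)) (fun _ => inferInstance)
  Matrix.of fun i j => M i (Tuple.sort (fun c => toLex (fun r => M r c)) j)

section Aux
variable {m n : ℕ}

noncomputable def colFn (A : Matrix (Fin m) (Fin n) ℤ) : Fin n → Lex (Fin m → ℤ) :=
  fun j => toLex (fun r => A r j)

def ColEquiv (A B : Matrix (Fin m) (Fin n) ℤ) : Prop :=
  ∃ (σ : Equiv.Perm (Fin n)) (ε : Fin n → ℤ), (∀ j, ε j = 1 ∨ ε j = -1) ∧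
    ∀ i j, B i j = ε j * A i (σ j)

lemma ColEquiv.exists_mul {A B : Matrix (Fin m) (Fin n) ℤ} (h : ColEquiv A B) :
    ∃ Q, IsSignedPerm Q ∧ B = A * Q := by
  obtain ⟨σ, ε, hε, hB⟩ := h
  set Q : Matrix (Fin n) (Fin n) ℤ := Matrix.of fun k j => if k = σ j then ε j else 0 with hQdef
  have hQne : ∀ k j, Q k j ≠ 0 ↔ k = σ j := by
    intro k j
    constructor
    · intro h; by_contra hne; apply h; simp [hQdef, hne]
    · intro h; subst h; simp only [hQdef, Matrix.of_apply, if_pos rfl]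
      rcases hε j with h | h <;> simp [h]
  refine ⟨Q, ⟨?_, ?_, ?_⟩, ?_⟩
  · intro i j
    simp only [hQdef, Matrix.of_apply]
    split
    · rcases hε j with h | h <;> simp [h]
    · simp
  · intro k
    refine ⟨σ.symm k, (hQne _ _).2 (by simp), fun j hj => ?_⟩
    have := (hQne _ _).1 hj
    rw [this]; simp
  · intro j
    exact ⟨σ j, (hQne _ _).2 rfl, fun k hk => (hQne _ _).1 hk⟩
  · ext i j
    show B i j = ∑ k, A i k * Q k j
    rw [hB i j]
    rw [Finset.sum_eq_single (σ j)]
    · simp [hQdef, mul_comm]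
    · intro k _ hk; simp [hQdef, hk]
    · intro h; exact absurd (Finset.mem_univ _) h

lemma isSignedPerm_mul_colEquiv {A : Matrix (Fin m) (Fin n) ℤ}
    {Q : Matrix (Fin n) (Fin n) ℤ} (hQ : IsSignedPerm Q) : ColEquiv A (A * Q) := by
  obtain ⟨hent, hrow, hcol⟩ := hQ
  have hex : ∀ j, ∃ k, Q k j ≠ 0 ∧ ∀ k', Q k' j ≠ 0 → k' = k := fun j => (hcol j)
  choose s hs hs' using hex
  have hsinj : Function.Injective s := by
    intro j j' hjj
    obtain ⟨jj, hjj1, hjj2⟩ := hrow (s j)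
    have h1 := hjj2 j (hs j)
    have h2 := hjj2 j' (by rw [hjj]; exact hs j')
    rw [h1, ← h2]
  have hsbij : Function.Bijective s :=
    ⟨hsinj, Finite.surjective_of_injective hsinj⟩
  set σ := Equiv.ofBijective s hsbij with hσ
  refine ⟨σ, fun j => Q (s j) j, ?_, ?_⟩
  · intro j
    rcases hent (s j) j with h | h | h
    · right; exact h
    · exact absurd h (hs j)
    · left; exact h
  · intro i j
    rw [Matrix.mul_apply, Finset.sum_eq_single (s j)]
    · rw [mul_comm]; rfl
    · intro k _ hk
      have : Q k j = 0 := by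
        by_contra hne
        exact hk (hs' j k hne)
      simp [this]
    · intro h; exact absurd (Finset.mem_univ _) h

lemma ColEquiv.trans {A B C : Matrix (Fin m) (Fin n) ℤ}
    (h1 : ColEquiv A B) (h2 : ColEquiv B C) : ColEquiv A C := by
  obtain ⟨σ, ε, hε, hB⟩ := h1
  obtain ⟨τ, δ, hδ, hC⟩ := h2
  refine ⟨σ * τ, fun j => δ j * ε (τ j), ?_, ?_⟩
  · intro j; rcases hδ j with h | h <;> rcases hε (τ j) with h' | h' <;> simp [h, h']
  · intro i j
    rw [hC, hB, mul_assoc]; rfl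

lemma ColEquiv.symm {A B : Matrix (Fin m) (Fin n) ℤ}
    (h : ColEquiv A B) : ColEquiv B A := by
  obtain ⟨σ, ε, hε, hB⟩ := h
  refine ⟨σ⁻¹, fun j => ε (σ⁻¹ j), fun j => hε (σ⁻¹ j), ?_⟩
  intro i j
  have := hB i (σ⁻¹ j)
  rw [show σ (σ⁻¹ j) = j from σ.apply_symm_apply j] at this
  rw [this, ← mul_assoc]
  rcases hε (σ⁻¹ j) with h | h <;> simp [Equiv.Perm.inv_def] at h <;> simp [h]

end Aux

section Norm
variable {m n : ℕ}

noncomputable instance lexLO (m : ℕ) : LinearOrder (Lex (Fin m → ℤ)) :=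
  @Pi.Lex.linearOrder (Fin m) (fun _ => ℤ)
    inferInstance (inferInstance : WellFoundedLT (Fin m)) (fun _ => inferInstance)

/-- first nonzero index -/
lemma exists_first {k : ℕ} (v : Fin k → ℤ) (h : ∃ i, v i ≠ 0) :
    ∃ i, v i ≠ 0 ∧ ∀ r, r < i → v r = 0 := by
  classical
  obtain ⟨i, hi, hmin⟩ := (wellFounded_lt (α := Fin k)).has_min {i | v i ≠ 0} h
  exact ⟨i, hi, fun r hr => by_contra fun hne => hmin r hne hr⟩

lemma beginsPos_neg {k : ℕ} {v : Fin k → ℤ} (h : BeginsPos v) :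
    ¬ BeginsPos (fun i => -v i) := by
  rintro ⟨j', hj', hz'⟩
  obtain ⟨j, hj, hz⟩ := h
  have hj'' : 0 < -v j' := hj'
  rcases lt_trichotomy j j' with hlt | rfl | hlt
  · have h0 : -v j = 0 := hz' j hlt
    omega
  · omega
  · have h0 : v j' = 0 := hz j' hlt
    omega

lemma negCols_apply_pos {A : Matrix (Fin m) (Fin n) ℤ} {j : Fin n}
    (h : BeginsPos (fun r => A r j)) (i : Fin m) : NegCols A i j = -A i j := by
  simp only [NegCols, Matrix.of_apply, if_pos h]

lemma negCols_apply_neg {A : Matrix (Fin m) (Fin n) ℤ} {j : Fin n}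
    (h : ¬ BeginsPos (fun r => A r j)) (i : Fin m) : NegCols A i j = A i j := by
  simp only [NegCols, Matrix.of_apply, if_neg h]

lemma negCols_not_beginsPos (A : Matrix (Fin m) (Fin n) ℤ) (j : Fin n) :
    ¬ BeginsPos (fun r => NegCols A r j) := by
  by_cases h : BeginsPos (fun r => A r j)
  · have : (fun r => NegCols A r j) = (fun r => -A r j) := funext (negCols_apply_pos h)
    rw [this]
    exact beginsPos_neg h
  · have : (fun r => NegCols A r j) = (fun r => A r j) := funext (negCols_apply_neg h)
    rw [this]
    exact h

lemma colEquiv_negCols (A : Matrix (Fin m) (Fin n) ℤ) : ColEquiv A (NegCols A) := by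
  classical
  refine ⟨1, fun j => if BeginsPos (fun r => A r j) then -1 else 1, ?_, ?_⟩
  · intro j
    by_cases h : BeginsPos (fun r => A r j) <;> simp [h]
  · intro i j
    by_cases h : BeginsPos (fun r => A r j)
    · rw [negCols_apply_pos h]
      simp [h]
    · rw [negCols_apply_neg h]
      simp [h]

lemma ordCols_apply (A : Matrix (Fin m) (Fin n) ℤ) (i : Fin m) (j : Fin n) :
    OrdCols A i j = A i (Tuple.sort (colFn A) j) := rfl

lemma colEquiv_ordCols (A : Matrix (Fin m) (Fin n) ℤ) : ColEquiv A (OrdCols A) := by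
  refine ⟨Tuple.sort (colFn A), fun _ => 1, fun _ => Or.inl rfl, ?_⟩
  intro i j
  rw [ordCols_apply, one_mul]

def Normalized (A : Matrix (Fin m) (Fin n) ℤ) : Prop :=
  (∀ j, ¬ BeginsPos (fun r => A r j)) ∧ Monotone (colFn A)

lemma normalized_ordCols_negCols (A : Matrix (Fin m) (Fin n) ℤ) :
    Normalized (OrdCols (NegCols A)) := by
  constructor
  · intro j
    have : (fun r => OrdCols (NegCols A) r j)
        = (fun r => NegCols A r (Tuple.sort (colFn (NegCols A)) j)) :=
      funext (fun r => ordCols_apply (NegCols A) r j)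
    rw [this]
    exact negCols_not_beginsPos A _
  · have h := Tuple.monotone_sort (colFn (NegCols A))
    intro a b hab
    exact h hab

lemma normalized_unique {A B : Matrix (Fin m) (Fin n) ℤ}
    (hA : Normalized A) (hB : Normalized B) (h : ColEquiv A B) : A = B := by
  obtain ⟨σ, ε, hε, hBe⟩ := h
  have key : ∀ i j, B i j = A i (σ j) := by
    intro i j
    rcases hε j with h1 | h1
    · rw [hBe, h1, one_mul]
    · by_cases hz : ∀ r, A r (σ j) = 0
      · rw [hBe, hz i, mul_zero]
      · exfalso
        push_neg at hz
        obtain ⟨i₀, hi₀, hzero⟩ := exists_first _ hz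
        have hneg : A i₀ (σ j) < 0 := by
          rcases lt_trichotomy (A i₀ (σ j)) 0 with h | h | h
          · exact h
          · exact absurd h hi₀
          · exact absurd ⟨i₀, h, fun r hr => hzero r hr⟩ (hA.1 (σ j))
        apply hB.1 j
        refine ⟨i₀, ?_, ?_⟩
        · show 0 < B i₀ j
          rw [hBe, h1]; omega
        · intro r hr
          show B r j = 0
          rw [hBe, h1, hzero r hr]; ring
  have hcols : colFn B = colFn A ∘ σ := by
    funext j
    show toLex _ = toLex _
    congr 1
    funext r
    exact key r j
  have huniq : colFn A ∘ σ = colFn A ∘ (1 : Equiv.Perm (Fin n)) := by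
    apply Tuple.unique_monotone
    · rw [← hcols]; exact hB.2
    · have := hA.2
      intro a b hab
      exact this hab
  have hfin : colFn B = colFn A := by rw [hcols, huniq]; rfl
  ext i j
  have h2 := congrFun hfin j
  exact (congrFun (toLex.injective h2) i).symm

end Norm

section Main
variable {m n : ℕ}

lemma not_rowLexLe_of {M N : Matrix (Fin m) (Fin n) ℤ} (i₀ : Fin m)
    (hrows : ∀ r, r < i₀ → N r = M r) (j₀ : Fin n)
    (hcols : ∀ c, c < j₀ → N i₀ c = M i₀ c) (hlt : N i₀ j₀ < M i₀ j₀) :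
    ¬ rowLexLe M N := by
  intro h
  have hinner : toLex (N i₀) < toLex (M i₀) := ⟨j₀, hcols, hlt⟩
  have houter : toLex (fun i => toLex (N i)) < toLex (fun i => toLex (M i)) :=
    ⟨i₀, fun r hr => congrArg toLex (hrows r hr), hinner⟩
  exact absurd (lt_of_le_of_lt h houter) (lt_irrefl _)

lemma hadamardEquiv_of_colEquiv {M M₀ N : Matrix (Fin m) (Fin n) ℤ}
    (hmem : HadamardEquiv M M₀) (hc : ColEquiv M₀ N) : HadamardEquiv M N := by
  obtain ⟨P, Q, hP, hQ, hM₀⟩ := hmem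
  have h1 : ColEquiv (P * M) M₀ := hM₀ ▸ isSignedPerm_mul_colEquiv hQ
  obtain ⟨Q', hQ', hN⟩ := (h1.trans hc).exists_mul
  exact ⟨P, Q', hP, hQ', hN⟩

lemma minimal_normalized {M M₀ : Matrix (Fin m) (Fin n) ℤ}
    (hmem : HadamardEquiv M M₀)
    (hmin : ∀ A, HadamardEquiv M A → rowLexLe M₀ A) : Normalized M₀ := by
  constructor
  · -- no column begins positive
    intro j₀ hbp
    obtain ⟨i₀, hpos, hz⟩ := hbp
    set N : Matrix (Fin m) (Fin n) ℤ :=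
      Matrix.of fun i c => if c = j₀ then -M₀ i c else M₀ i c with hN
    have hc : ColEquiv M₀ N := by
      refine ⟨1, fun c => if c = j₀ then -1 else 1, ?_, ?_⟩
      · intro c; by_cases h : c = j₀ <;> simp [h]
      · intro i c
        by_cases h : c = j₀ <;> simp [hN, h]
    have hle := hmin N (hadamardEquiv_of_colEquiv hmem hc)
    refine not_rowLexLe_of i₀ ?_ j₀ ?_ ?_ hle
    · intro r hr
      funext c
      by_cases h : c = j₀
      · subst h; simp [hN, hz r hr]
      · simp [hN, h]
    · intro c hc'
      have h : c ≠ j₀ := ne_of_lt hc'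
      simp [hN, h]
    · have : N i₀ j₀ = -M₀ i₀ j₀ := by simp [hN]
      rw [this]
      have hpos' : 0 < M₀ i₀ j₀ := hpos
      omega
  · -- columns weakly increasing
    by_contra hmon
    simp only [Monotone] at hmon
    push_neg at hmon
    obtain ⟨j, j', hle, hlt'⟩ := hmon
    have hne : j ≠ j' := by rintro rfl; exact absurd hlt' (lt_irrefl _)
    have hjj : j < j' := lt_of_le_of_ne hle hne
    obtain ⟨i₀, hz, hlt⟩ : ∃ i₀, (∀ r, r < i₀ → M₀ r j' = M₀ r j) ∧ M₀ i₀ j' < M₀ i₀ j :=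
      hlt'
    set N : Matrix (Fin m) (Fin n) ℤ :=
      Matrix.of fun i c => M₀ i (Equiv.swap j j' c) with hN
    have hc : ColEquiv M₀ N :=
      ⟨Equiv.swap j j', fun _ => 1, fun _ => Or.inl rfl, fun i c => by simp [hN]⟩
    have hle2 := hmin N (hadamardEquiv_of_colEquiv hmem hc)
    refine not_rowLexLe_of i₀ ?_ j ?_ ?_ hle2
    · intro r hr
      funext c
      rcases eq_or_ne c j with rfl | h1
      · simp [hN, Equiv.swap_apply_left, hz r hr]
      · rcases eq_or_ne c j' with rfl | h2
        · simp [hN, Equiv.swap_apply_right, (hz r hr).symm]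
        · simp [hN, Equiv.swap_apply_of_ne_of_ne h1 h2]
    · intro c hc'
      have h1 : c ≠ j := ne_of_lt hc'
      have h2 : c ≠ j' := ne_of_lt (hc'.trans hjj)
      simp [hN, Equiv.swap_apply_of_ne_of_ne h1 h2]
    · have : N i₀ j = M₀ i₀ j' := by simp [hN, Equiv.swap_apply_left]
      rw [this]; exact hlt

end Main


/-- For every integer matrix `M`, the minimal element `M₀` of the Hadamard
equivalence class of `M` with respect to the row-lex ordering equals the minimum, over
all signed permutation matrices `P`, of `Ord(Neg(P * M))`: it is attained by some `P`
and is a row-lex lower bound of `Ord(Neg(P * M))` over all `P`. -/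
theorem min_of_class_eq_min_ord_neg {m n : ℕ} (M M₀ : Matrix (Fin m) (Fin n) ℤ)
    (hmem : HadamardEquiv M M₀)
    (hmin : ∀ A, HadamardEquiv M A → rowLexLe M₀ A) :
    (∃ P : Matrix (Fin m) (Fin m) ℤ, IsSignedPerm P ∧ M₀ = OrdCols (NegCols (P * M))) ∧
    (∀ P : Matrix (Fin m) (Fin m) ℤ, IsSignedPerm P →
      rowLexLe M₀ (OrdCols (NegCols (P * M)))) := by
  have hpart2 : ∀ P : Matrix (Fin m) (Fin m) ℤ, IsSignedPerm P →
      rowLexLe M₀ (OrdCols (NegCols (P * M))) := by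
    intro P hP
    have hc : ColEquiv (P * M) (OrdCols (NegCols (P * M))) :=
      (colEquiv_negCols (P * M)).trans (colEquiv_ordCols (NegCols (P * M)))
    obtain ⟨Q, hQ, hS⟩ := hc.exists_mul
    exact hmin _ ⟨P, Q, hP, hQ, hS⟩
  refine ⟨?_, hpart2⟩
  obtain ⟨P, Q, hP, hQ, hM₀⟩ := hmem
  refine ⟨P, hP, ?_⟩
  have hC1 : ColEquiv (P * M) M₀ := hM₀ ▸ isSignedPerm_mul_colEquiv hQ
  have hC2 : ColEquiv (P * M) (OrdCols (NegCols (P * M))) :=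
    (colEquiv_negCols (P * M)).trans (colEquiv_ordCols (NegCols (P * M)))
  exact normalized_unique
    (minimal_normalized ⟨P, Q, hP, hQ, hM₀⟩ hmin)
    (normalized_ordCols_negCols (P * M))
    (hC1.symm.trans hC2)
end

section
/- Let M₀ be an m×n integer matrix that is minimal in its Hadamard equivalence class with respect to the row-lex ordering, and let Q be an n×n signed permutation matrix. Then Ord(Neg(M₀·Q)) = M₀. -/
open Matrix

lemma exists_min_diff {k : ℕ} {α : Type*} {f g : Fin k → α} (h : f ≠ g) :
    ∃ i, f i ≠ g i ∧ ∀ j, j < i → f j = g j := by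
  obtain ⟨i, hi, hmin⟩ := (IsWellFounded.wf (r := ((· < ·) : Fin k → Fin k → Prop))).has_min
    {i | f i ≠ g i} (Function.ne_iff.1 h)
  exact ⟨i, hi, fun j hj => not_not.1 fun hne => hmin j hne hj⟩

lemma rowLexLe_of_firstDiff {m n : ℕ} {A B : Matrix (Fin m) (Fin n) ℤ} (i₀ : Fin m) (j₀ : Fin n)
    (hrow : ∀ i, i < i₀ → A i = B i) (hcol : ∀ j, j < j₀ → A i₀ j = B i₀ j)
    (hlt : A i₀ j₀ < B i₀ j₀) : rowLexLe A B := by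
  apply le_of_lt
  exact ⟨i₀, fun i hi => show toLex (A i) = toLex (B i) from congrArg _ (hrow i hi), ⟨j₀, hcol, hlt⟩⟩

lemma rowLexLe_of_cols {m n : ℕ} {A B : Matrix (Fin m) (Fin n) ℤ}
    (h : ∀ j, toLex (fun i => A i j) ≤ toLex (fun i => B i j)) : rowLexLe A B := by
  by_cases hAB : A = B
  · exact le_of_eq (by rw [hAB])
  · have hAB' : (fun i => A i) ≠ (fun i => B i) := fun hc => hAB (by funext i j; exact congrFun (congrFun hc i) j)
    obtain ⟨i₀, hi₀ne, hi₀min⟩ := exists_min_diff hAB'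
    have hi₀ne' : (fun j => A i₀ j) ≠ (fun j => B i₀ j) := fun hc => hi₀ne (by funext j; exact congrFun hc j)
    obtain ⟨j₀, hj₀ne, hj₀min⟩ := exists_min_diff hi₀ne'
    refine rowLexLe_of_firstDiff i₀ j₀ hi₀min hj₀min ?_
    rcases (h j₀).lt_or_eq with hlt | heq
    · obtain ⟨i₁, hb, hl⟩ := hlt
      rcases lt_trichotomy i₁ i₀ with h1 | h1 | h1
      · exact absurd (congrFun (hi₀min i₁ h1) j₀) (ne_of_lt hl)
      · exact h1 ▸ hl
      · exact absurd (hb i₀ h1) hj₀ne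
    · exact absurd (congrFun (toLex.injective heq) i₀) hj₀ne

lemma rowLexLe_sorted_perm {m n : ℕ} {A B : Matrix (Fin m) (Fin n) ℤ}
    (hmono : Monotone fun j => toLex (fun i => A i j))
    (σ : Equiv.Perm (Fin n)) (hcols : ∀ j i, B i j = A i (σ j)) : rowLexLe A B := by
  classical
  by_cases hAB : A = B
  · exact le_of_eq (by rw [hAB])
  · have hAB' : (fun i => A i) ≠ (fun i => B i) := fun hc => hAB (by funext i j; exact congrFun (congrFun hc i) j)
    obtain ⟨i₀, hi₀ne, hi₀min⟩ := exists_min_diff hAB'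
    have hi₀ne' : (fun j => A i₀ j) ≠ (fun j => B i₀ j) := fun hc => hi₀ne (by funext j; exact congrFun hc j)
    obtain ⟨j₀, hj₀ne, hj₀min⟩ := exists_min_diff hi₀ne'
    refine rowLexLe_of_firstDiff i₀ j₀ hi₀min hj₀min ?_
    by_contra hnot
    have hBA : B i₀ j₀ < A i₀ j₀ := lt_of_le_of_ne (not_lt.1 hnot) (Ne.symm hj₀ne)
    set P : Fin n → Lex (Fin m → ℤ) := fun j => toLex (fun i => if i ≤ i₀ then A i j else 0) with hP
    -- P is monotone
    have hPmono : Monotone P := by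
      intro j j' hjj'
      rcases (hmono hjj').lt_or_eq with hlt | heq
      · obtain ⟨i₁, hb, hl⟩ := hlt
        rcases le_or_gt i₁ i₀ with h1 | h1
        · refine le_of_lt ⟨i₁, fun k hk => ?_, ?_⟩
          · show (if k ≤ i₀ then A k j else 0) = (if k ≤ i₀ then A k j' else 0)
            by_cases hki : k ≤ i₀
            · rw [if_pos hki, if_pos hki]; exact hb k hk
            · rw [if_neg hki, if_neg hki]
          · show (if i₁ ≤ i₀ then A i₁ j else 0) < (if i₁ ≤ i₀ then A i₁ j' else 0)
            rw [if_pos h1, if_pos h1]; exact hl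
        · refine le_of_eq (congrArg toLex (funext fun i => ?_))
          by_cases hi : i ≤ i₀
          · rw [if_pos hi, if_pos hi]; exact hb i (lt_of_le_of_lt hi h1)
          · rw [if_neg hi, if_neg hi]
      · exact le_of_eq (congrArg toLex (funext fun i => by
          rw [show A i j = A i j' from congrFun (toLex.injective heq) i]))
    -- P (σ j₀) < P j₀
    have hPσlt : P (σ j₀) < P j₀ := by
      refine ⟨i₀, fun k hk => ?_, ?_⟩
      · show (if k ≤ i₀ then A k (σ j₀) else 0) = (if k ≤ i₀ then A k j₀ else 0)
        rw [if_pos (le_of_lt hk), if_pos (le_of_lt hk), ← hcols j₀ k, congrFun (hi₀min k hk) j₀]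
      · show (if i₀ ≤ i₀ then A i₀ (σ j₀) else 0) < (if i₀ ≤ i₀ then A i₀ j₀ else 0)
        rw [if_pos le_rfl, if_pos le_rfl, ← hcols j₀ i₀]; exact hBA
    -- P (σ j) = P j for j < j₀
    have hPσeq : ∀ j, j < j₀ → P (σ j) = P j := by
      intro j hj
      refine congrArg toLex (funext fun i => ?_)
      by_cases hi : i ≤ i₀
      · rw [if_pos hi, if_pos hi, ← hcols j i]
        rcases hi.lt_or_eq with h | h
        · exact (congrFun (hi₀min i h) j).symm
        · subst h; exact (hj₀min j hj).symm
      · rw [if_neg hi, if_neg hi]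
    -- counting
    set p := P j₀ with hp
    set s' : Finset (Fin n) := Finset.univ.filter (fun j => j < j₀ ∧ P j < p) with hs'
    set w : Finset (Fin n) := Finset.univ.filter (fun k => P k < p) with hw
    have hsub : w ⊆ s' := by
      intro k hk
      rw [hw, Finset.mem_filter] at hk
      rw [hs', Finset.mem_filter]
      refine ⟨Finset.mem_univ _, ?_, hk.2⟩
      by_contra hkk
      exact absurd (hPmono (not_lt.1 hkk)) (not_le_of_gt hk.2)
    have hmap : ∀ j ∈ insert j₀ s', σ j ∈ w := by
      intro j hj
      rcases Finset.mem_insert.1 hj with rfl | hj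
      · rw [hw, Finset.mem_filter]; exact ⟨Finset.mem_univ _, hPσlt⟩
      · rw [hs', Finset.mem_filter] at hj
        rw [hw, Finset.mem_filter]
        exact ⟨Finset.mem_univ _, (hPσeq j hj.2.1) ▸ hj.2.2⟩
    have h1 : (insert j₀ s').card ≤ w.card :=
      Finset.card_le_card_of_injOn σ hmap (σ.injective.injOn)
    have h2 : (insert j₀ s').card = s'.card + 1 :=
      Finset.card_insert_of_notMem (by rw [hs']; simp)
    have h3 : w.card ≤ s'.card := Finset.card_le_card hsub
    omega

noncomputable def ncol {k : ℕ} (v : Fin k → ℤ) : Fin k → ℤ :=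
  haveI := Classical.propDecidable
  if BeginsPos v then (fun i => -v i) else v

lemma negCols_col {m n : ℕ} (M : Matrix (Fin m) (Fin n) ℤ) (j : Fin n) :
    (fun i => NegCols M i j) = ncol (fun r => M r j) := by
  funext i
  simp only [NegCols, ncol, Matrix.of_apply]
  by_cases h : BeginsPos (fun r => M r j)
  · rw [if_pos h, if_pos h]
  · rw [if_neg h, if_neg h]

lemma ncol_le {k : ℕ} (v : Fin k → ℤ) : toLex (ncol v) ≤ toLex v := by
  unfold ncol
  split_ifs with h
  · obtain ⟨j, hpos, hz⟩ := h
    refine le_of_lt ⟨j, fun i hi => ?_, show -v j < v j by omega⟩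
    show -v i = v i
    rw [hz i hi]; ring
  · exact le_rfl

lemma ncol_neg {k : ℕ} (v : Fin k → ℤ) : ncol (fun i => -v i) = ncol v := by
  unfold ncol
  by_cases h0 : v = fun _ => (0 : ℤ)
  · subst h0; split_ifs <;> funext i <;> simp
  · obtain ⟨j, hj0, hz0⟩ := exists_min_diff h0
    have hj : v j ≠ 0 := hj0
    have hz : ∀ i, i < j → v i = 0 := hz0
    rcases lt_or_gt_of_ne hj with hneg | hpos
    · have hB : BeginsPos (fun i => -v i) := ⟨j, show (0:ℤ) < -v j by omega, fun i hi => show -v i = 0 by rw [hz i hi]; ring⟩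
      have hnB : ¬ BeginsPos v := by
        rintro ⟨j', hp', hz'⟩
        rcases lt_trichotomy j' j with h | h | h
        · exact absurd (hz j' h) (by omega)
        · subst h; omega
        · exact absurd (hz' j h) (by omega)
      rw [if_pos hB, if_neg hnB]
      funext i; ring
    · have hB : BeginsPos v := ⟨j, hpos, hz⟩
      have hnB : ¬ BeginsPos (fun i => -v i) := by
        rintro ⟨j', hp', hz'⟩
        simp only [] at hp' hz'
        rcases lt_trichotomy j' j with h | h | h
        · exact absurd (hz j' h) (by omega)
        · subst h; omega
        · have := hz' j h; omega
      rw [if_neg hnB, if_pos hB]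

lemma exists_rho {n : ℕ} {Q : Matrix (Fin n) (Fin n) ℤ} (hQ : IsSignedPerm Q) :
    ∃ ρ : Equiv.Perm (Fin n), (∀ c, Q (ρ c) c ≠ 0) ∧ (∀ c k, k ≠ ρ c → Q k c = 0) := by
  choose f hf hu using fun c => hQ.2.2 c
  have hinj : Function.Injective f := by
    intro c c' hcc'
    obtain ⟨j, hj, hju⟩ := hQ.2.1 (f c)
    have e1 : c = j := hju c (hf c)
    have e2 : c' = j := hju c' (by rw [hcc']; exact hf c')
    rw [e1, e2]
  refine ⟨Equiv.ofBijective f (Finite.injective_iff_bijective.1 hinj), fun c => hf c, fun c k hk => ?_⟩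
  by_contra hne
  exact hk (hu c k hne)

lemma mulQ_col {m n : ℕ} (M : Matrix (Fin m) (Fin n) ℤ) (Q : Matrix (Fin n) (Fin n) ℤ)
    {r c : Fin n} (hz : ∀ k, k ≠ r → Q k c = 0) (i : Fin m) :
    (M * Q) i c = M i r * Q r c := by
  rw [mul_apply]
  exact Finset.sum_eq_single r (fun b _ hb => by rw [hz b hb, mul_zero]) (fun h => absurd (Finset.mem_univ r) h)

noncomputable def VLO (m : ℕ) : LinearOrder (Lex (Fin m → ℤ)) :=
  @Pi.Lex.linearOrder (Fin m) (fun _ => ℤ)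
    inferInstance (inferInstance : WellFoundedLT (Fin m)) (fun _ => inferInstance)

/-- If `M₀` is minimal in its Hadamard equivalence class with respect to
the row-lex ordering and `Q` is a signed permutation matrix, then
`Ord(Neg(M₀ * Q)) = M₀`. -/
theorem ord_neg_of_minimal_mul_signedPerm {m n : ℕ} (M₀ : Matrix (Fin m) (Fin n) ℤ)
    (hmin : IsRowLexMinimal M₀) (Q : Matrix (Fin n) (Fin n) ℤ) (hQ : IsSignedPerm Q) :
    OrdCols (NegCols (M₀ * Q)) = M₀ := by
  classical
  set N := M₀ * Q with hN
  obtain ⟨ρ, hρne, hρzero⟩ := exists_rho hQ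
  set f : Fin n → Lex (Fin m → ℤ) := fun c => toLex (fun r => NegCols N r c) with hf
  set τ : Equiv.Perm (Fin n) := @Tuple.sort n _ (VLO m) f with hτ
  set S := OrdCols (NegCols N) with hS
  have hSapp : ∀ i j, S i j = NegCols N i (τ j) := fun i j => rfl
  -- monotone columns of S
  have hmono : Monotone fun j => toLex (fun i => S i j) := by
    have h := @Tuple.monotone_sort n _ (VLO m) f
    exact h
  -- column description of S
  have hScol : ∀ j, (fun i => S i j) = ncol (fun i => M₀ i (ρ (τ j))) := by
    intro j
    have h1 : (fun i => S i j) = ncol (fun i => N i (τ j)) := by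
      funext i; rw [hSapp i j, congrFun (negCols_col N (τ j)) i]
    rw [h1]
    have h2 : (fun i => N i (τ j)) = fun i => M₀ i (ρ (τ j)) * Q (ρ (τ j)) (τ j) :=
      funext fun i => mulQ_col M₀ Q (hρzero (τ j)) i
    rw [h2]
    rcases hQ.1 (ρ (τ j)) (τ j) with hs | hs | hs
    · rw [show (fun i => M₀ i (ρ (τ j)) * Q (ρ (τ j)) (τ j)) = fun i => -(M₀ i (ρ (τ j))) from
        funext fun i => by rw [hs]; ring]
      exact ncol_neg _
    · exact absurd hs (hρne (τ j))
    · rw [show (fun i => M₀ i (ρ (τ j)) * Q (ρ (τ j)) (τ j)) = fun i => M₀ i (ρ (τ j)) from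
        funext fun i => by rw [hs]; ring]
  -- Direction 1 : rowLexLe S M₀
  have dir1 : rowLexLe S M₀ := by
    set C : Matrix (Fin m) (Fin n) ℤ := Matrix.of fun i j => ncol (fun r => M₀ r j) i with hC
    have step1 : rowLexLe S C := by
      refine rowLexLe_sorted_perm hmono ((τ.trans ρ).symm) (fun j i => ?_)
      have := congrFun (hScol ((τ.trans ρ).symm j)) i
      rw [this]
      show ncol (fun r => M₀ r j) i = ncol (fun i => M₀ i (ρ (τ ((τ.trans ρ).symm j)))) i
      rw [show ρ (τ ((τ.trans ρ).symm j)) = j from (τ.trans ρ).apply_symm_apply j]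
    have step2 : rowLexLe C M₀ := by
      refine rowLexLe_of_cols (fun j => ?_)
      have : (fun i => C i j) = ncol (fun r => M₀ r j) := rfl
      rw [this]
      exact ncol_le _
    exact le_trans step1 step2
  -- Direction 2 : rowLexLe M₀ S
  have dir2 : rowLexLe M₀ S := by
    set e : Fin n → ℤ := fun j => if BeginsPos (fun r => N r (τ j)) then -1 else 1 with he
    have hepm : ∀ j, e j = 1 ∨ e j = -1 := fun j => by
      by_cases h : BeginsPos (fun r => N r (τ j)) <;> simp [he, h]
    have hene : ∀ j, e j ≠ 0 := fun j => by rcases hepm j with h | h <;> rw [h] <;> norm_num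
    set Q' : Matrix (Fin n) (Fin n) ℤ := Matrix.of fun k j => e j * Q k (τ j) with hQ'
    have hQ'app : ∀ k j, Q' k j = e j * Q k (τ j) := fun k j => rfl
    have hQ'sp : IsSignedPerm Q' := by
      refine ⟨fun k j => ?_, fun k => ?_, fun j => ?_⟩
      · rw [hQ'app]
        rcases hQ.1 k (τ j) with h | h | h <;> rcases hepm j with h' | h' <;>
          rw [h, h'] <;> norm_num
      · obtain ⟨c, hc, hu⟩ := hQ.2.1 k
        refine ⟨τ.symm c, ?_, fun j hj => ?_⟩
        · show Q' k (τ.symm c) ≠ 0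
          rw [hQ'app, τ.apply_symm_apply]
          exact mul_ne_zero (hene _) hc
        · have hj' : Q' k j ≠ 0 := hj
          rw [hQ'app] at hj'
          have : Q k (τ j) ≠ 0 := fun h => hj' (by rw [h, mul_zero])
          have := hu (τ j) this
          exact τ.injective (by rw [this, τ.apply_symm_apply])
      · obtain ⟨k, hk, hu⟩ := hQ.2.2 (τ j)
        refine ⟨k, ?_, fun i hi => ?_⟩
        · show Q' k j ≠ 0
          rw [hQ'app]; exact mul_ne_zero (hene _) hk
        · have hi' : Q' i j ≠ 0 := hi
          rw [hQ'app] at hi'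
          exact hu i (fun h => hi' (by rw [h, mul_zero]))
    have hSeq : S = (1 : Matrix (Fin m) (Fin m) ℤ) * M₀ * Q' := by
      rw [Matrix.one_mul]
      ext i j
      rw [Matrix.mul_apply]
      have hsum : ∑ k, M₀ i k * Q' k j = e j * ∑ k, M₀ i k * Q k (τ j) := by
        rw [Finset.mul_sum]
        refine Finset.sum_congr rfl (fun k _ => ?_)
        rw [hQ'app]; ring
      rw [hsum, ← Matrix.mul_apply, ← hN]
      rw [hSapp i j]
      show (if BeginsPos (fun r => N r (τ j)) then -N i (τ j) else N i (τ j)) = e j * N i (τ j)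
      rw [he]
      beta_reduce
      split_ifs with h <;> ring
    exact hmin S ⟨1, Q', isSignedPerm_one, hQ'sp, hSeq⟩
  -- antisymmetry
  have heq : (fun i => toLex (S i)) = (fun i => toLex (M₀ i)) :=
    toLex.injective (le_antisymm dir1 dir2)
  ext i j
  exact congrFun (toLex.injective (congrFun heq i)) j
end

section
/- Let M be an (n₁n₂)×(n₁n₂) integer matrix partitioned into n₁×n₁ blocks C_{ij}, each of which is a circulant n₂×n₂ integer matrix, and suppose M·Mᵀ = k·I. Let S be the n₁×n₁ integer matrix whose (i,j) entry is the common row sum of the block C_{ij}. Then S·Sᵀ = k·I_{n₁}, i.e., S ∈ IW(n₁,k). -/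
open Matrix

/-- If an `(n₁n₂)×(n₁n₂)` integer matrix `M`, partitioned into `n₁×n₁`
blocks each of which is a circulant `n₂×n₂` matrix, satisfies `M * Mᵀ = k • I`, then
the `n₁×n₁` matrix `S` of common row sums of the blocks satisfies `S * Sᵀ = k • I`,
i.e. `S ∈ IW(n₁, k)`. -/
theorem blockCirculant_rowSums_mem_IW (n₁ n₂ : ℕ) [NeZero n₂] (k : ℤ)
    (M : Matrix (Fin n₁ × ZMod n₂) (Fin n₁ × ZMod n₂) ℤ)
    (hcirc : ∀ i j : Fin n₁, ∃ f : ZMod n₂ → ℤ,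
      ∀ a b : ZMod n₂, M (i, a) (j, b) = f (a - b))
    (hM : M * Mᵀ = k • (1 : Matrix (Fin n₁ × ZMod n₂) (Fin n₁ × ZMod n₂) ℤ))
    (S : Matrix (Fin n₁) (Fin n₁) ℤ)
    (hS : ∀ (i j : Fin n₁) (a : ZMod n₂), S i j = ∑ b : ZMod n₂, M (i, a) (j, b)) :
    S * Sᵀ = k • (1 : Matrix (Fin n₁) (Fin n₁) ℤ) := by
  -- column sums of a circulant block equal the common row sum
  have hcol : ∀ (j l : Fin n₁) (c : ZMod n₂), (∑ b : ZMod n₂, M (j, b) (l, c)) = S j l := by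
    intro j l c
    obtain ⟨f, hf⟩ := hcirc j l
    have h1 : (∑ b : ZMod n₂, M (j, b) (l, c)) = ∑ b : ZMod n₂, f b := by
      simp only [hf]
      exact Fintype.sum_equiv (Equiv.subRight c) _ _ (fun b => rfl)
    have h2 : S j l = ∑ b : ZMod n₂, f b := by
      rw [hS j l 0]
      simp only [hf]
      exact Fintype.sum_equiv (Equiv.neg _) _ _ (fun b => by simp [zero_sub])
    rw [h1, h2]
  ext i j
  have key : ((S * Sᵀ) i j) = ∑ b : ZMod n₂, (M * Mᵀ) (i, (0 : ZMod n₂)) (j, b) := by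
    simp only [Matrix.mul_apply, Matrix.transpose_apply]
    calc ∑ l : Fin n₁, S i l * S j l
        = ∑ l : Fin n₁, ∑ c : ZMod n₂, M (i, 0) (l, c) * S j l := by
          refine Finset.sum_congr rfl fun l _ => ?_
          rw [hS i l 0, Finset.sum_mul]
      _ = ∑ x : Fin n₁ × ZMod n₂, M (i, 0) x * S j x.1 := by
          rw [Fintype.sum_prod_type]
      _ = ∑ x : Fin n₁ × ZMod n₂, ∑ b : ZMod n₂, M (i, 0) x * M (j, b) x := by
          refine Finset.sum_congr rfl fun x _ => ?_
          rw [← Finset.mul_sum, hcol j x.1 x.2]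
      _ = ∑ b : ZMod n₂, ∑ x : Fin n₁ × ZMod n₂, M (i, 0) x * M (j, b) x :=
          Finset.sum_comm
  rw [key, hM]
  simp only [Matrix.smul_apply, Matrix.one_apply, Prod.mk.injEq, smul_eq_mul]
  by_cases hij : i = j
  · subst hij
    simp [Finset.sum_ite_eq']
  · simp [hij]
end
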